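/- Let a, b, c, d be real with X₁ = [[a,b],[b,c]] invertible. If the matrix X₂·X₁⁻¹ (with X₂ = [[b,c],[c,d]]) has a repeated real eigenvalue and is not diagonalizable, or has non-real complex eigenvalues, then the symmetric tensor X with Xᵢⱼₖ given by a,b,c,d cannot be written as uᵢuⱼuₖ + vᵢvⱼvₖ for any real vectors u, v ∈ ℝ². -/

import Mathlib

theorem no_symmetric_rank_two_of_defective_or_complex_eigenvalues
    (a b c d : ℝ)
    (hX : IsUnit (!![a, b; b, c] : Matrix (Fin 2) (Fin 2) ℝ).det)
    (hM : (((!![b, c; c, d] : Matrix (Fin 2) (Fin 2) ℝ) *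
          (!![a, b; b, c] : Matrix (Fin 2) (Fin 2) ℝ)⁻¹).trace ^ 2 -
            4 * ((!![b, c; c, d] : Matrix (Fin 2) (Fin 2) ℝ) *
              (!![a, b; b, c] : Matrix (Fin 2) (Fin 2) ℝ)⁻¹).det = 0 ∧
          (!![b, c; c, d] : Matrix (Fin 2) (Fin 2) ℝ) *
              (!![a, b; b, c] : Matrix (Fin 2) (Fin 2) ℝ)⁻¹ ≠
            (((!![b, c; c, d] : Matrix (Fin 2) (Fin 2) ℝ) *
              (!![a, b; b, c] : Matrix (Fin 2) (Fin 2) ℝ)⁻¹).trace / 2) • 1) ∨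
        ((!![b, c; c, d] : Matrix (Fin 2) (Fin 2) ℝ) *
          (!![a, b; b, c] : Matrix (Fin 2) (Fin 2) ℝ)⁻¹).trace ^ 2 -
            4 * ((!![b, c; c, d] : Matrix (Fin 2) (Fin 2) ℝ) *
              (!![a, b; b, c] : Matrix (Fin 2) (Fin 2) ℝ)⁻¹).det < 0) :
    ¬ ∃ u v : Fin 2 → ℝ, ∀ i j : Fin 2,
      (!![a, b; b, c] : Matrix (Fin 2) (Fin 2) ℝ) i j =
          u i * u j * u 0 + v i * v j * v 0 ∧
      (!![b, c; c, d] : Matrix (Fin 2) (Fin 2) ℝ) i j =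
          u i * u j * u 1 + v i * v j * v 1 := by
  rintro ⟨u, v, h⟩
  have ha : a = u 0 * u 0 * u 0 + v 0 * v 0 * v 0 := by simpa using (h 0 0).1
  have hb : b = u 0 * u 1 * u 0 + v 0 * v 1 * v 0 := by simpa using (h 0 1).1
  have hc : c = u 1 * u 1 * u 0 + v 1 * v 1 * v 0 := by simpa using (h 1 1).1
  have hd : d = u 1 * u 1 * u 1 + v 1 * v 1 * v 1 := by simpa using (h 1 1).2
  have hdet : (!![a, b; b, c] : Matrix (Fin 2) (Fin 2) ℝ).det ≠ 0 := hX.ne_zero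
  have hD : a * c - b * b ≠ 0 := by
    simpa [Matrix.det_fin_two] using hdet
  have hfact : a * c - b * b = (u 0 * v 0) * (u 0 * v 1 - u 1 * v 0) ^ 2 := by
    rw [ha, hb, hc]; ring
  have hps : u 0 * v 1 - u 1 * v 0 ≠ 0 := by
    intro hz
    exact hD (by rw [hfact, hz]; ring)
  have key : (a * d - b * c) ^ 2 - 4 * (a * c - b * b) * (b * d - c * c)
      = (u 0 * v 1 - u 1 * v 0) ^ 6 := by
    rw [ha, hb, hc, hd]; ring
  have htr : ((!![b, c; c, d] : Matrix (Fin 2) (Fin 2) ℝ) *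
      (!![a, b; b, c] : Matrix (Fin 2) (Fin 2) ℝ)⁻¹).trace = (a * d - b * c) / (a * c - b * b) := by
    rw [Matrix.inv_def]
    simp [Matrix.adjugate_fin_two, Matrix.det_fin_two, Matrix.trace_fin_two, Matrix.mul_apply,
      Fin.sum_univ_two, Ring.inverse_eq_inv']
    field_simp
    ring
  have hdt : ((!![b, c; c, d] : Matrix (Fin 2) (Fin 2) ℝ) *
      (!![a, b; b, c] : Matrix (Fin 2) (Fin 2) ℝ)⁻¹).det = (b * d - c * c) / (a * c - b * b) := by
    rw [Matrix.inv_def]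
    simp [Matrix.adjugate_fin_two, Matrix.det_fin_two, Matrix.mul_apply,
      Fin.sum_univ_two, Ring.inverse_eq_inv']
    have ht : (a * c - b * b) * (a * c - b * b)⁻¹ = 1 := mul_inv_cancel₀ hD
    rw [div_eq_mul_inv]
    generalize (a * c - b * b)⁻¹ = t at *
    linear_combination (b * d - c * c) * t * ht
  have hpos : ((a * d - b * c) / (a * c - b * b)) ^ 2
      - 4 * ((b * d - c * c) / (a * c - b * b)) > 0 := by
    have heq : ((a * d - b * c) / (a * c - b * b)) ^ 2
        - 4 * ((b * d - c * c) / (a * c - b * b))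
        = ((a * d - b * c) ^ 2 - 4 * (a * c - b * b) * (b * d - c * c)) / (a * c - b * b) ^ 2 := by
      field_simp
    rw [heq, key]
    positivity
  rcases hM with ⟨h1, _⟩ | h2
  · rw [htr, hdt] at h1; linarith
  · rw [htr, hdt] at h2; linarith
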